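/- arXiv:0801.3770 — 2 statements merged into one kernel-verified Lean document; each statement's English description precedes it below -/
import Mathlib

section
/- Let G be a finite group, A ⊴ G abelian normal, M a G-module with trivial A-action. Every cohomology class in the kernel of the restriction map res : H²(G,M) → H²(A,M) admits a representative cocycle f ∈ Z²(G,M) satisfying f(g₁,g₂) = f(g₁,g₂a) for all g₁,g₂ ∈ G and a ∈ A. -/
section CNRAux

variable {G M : Type*} [Group G] [CommGroup M] [MulDistribMulAction G M]

/-- Coset representative of `g` modulo `A` (representative of the left coset `gA`). -/
noncomputable def CNR.rho (A : Subgroup G) (g : G) : G := (QuotientGroup.mk g : G ⧸ A).out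

lemma CNR.rho_mem (A : Subgroup G) (g : G) : (CNR.rho A g)⁻¹ * g ∈ A := by
  have h : (QuotientGroup.mk (CNR.rho A g) : G ⧸ A) = QuotientGroup.mk g :=
    QuotientGroup.out_eq' _
  exact QuotientGroup.eq.mp h

lemma CNR.rho_mul (A : Subgroup G) (g a : G) (ha : a ∈ A) :
    CNR.rho A (g * a) = CNR.rho A g := by
  unfold CNR.rho
  congr 1
  apply QuotientGroup.eq.mpr
  have : (g * a)⁻¹ * g = a⁻¹ := by group
  rw [this]; exact A.inv_mem ha

/-- Auxiliary function used to modify a cocycle. -/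
noncomputable def CNR.u (A : Subgroup G) (f : G → G → M) (c₀ : G → M) (g : G) : M :=
  (CNR.rho A g) • (c₀ ((CNR.rho A g)⁻¹ * g))⁻¹ * f (CNR.rho A g) ((CNR.rho A g)⁻¹ * g)

lemma CNR.uB (A : Subgroup G)
    (hAtriv : ∀ a ∈ A, ∀ m : M, a • m = m)
    (f : G → G → M)
    (hcoc : ∀ g₁ g₂ g₃ : G, g₁ • f g₂ g₃ * f g₁ (g₂ * g₃) = f (g₁ * g₂) g₃ * f g₁ g₂)
    (c₀ : G → M)
    (hc₀ : ∀ a ∈ A, ∀ b ∈ A, f a b = a • c₀ b * (c₀ (a * b))⁻¹ * c₀ a)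
    (g a : G) (ha : a ∈ A) :
    CNR.u A f c₀ (g * a) = CNR.u A f c₀ g * g • (c₀ a)⁻¹ * f g a := by
  set r := CNR.rho A g with hrdef
  have h1 : CNR.rho A (g * a) = r := CNR.rho_mul A g a ha
  have hb : r⁻¹ * g ∈ A := CNR.rho_mem A g
  unfold CNR.u
  rw [h1, ← hrdef]
  have h2 : r⁻¹ * (g * a) = (r⁻¹ * g) * a := (mul_assoc _ _ _).symm
  rw [h2]
  set b := r⁻¹ * g with hbdef
  have hrb : r * b = g := by rw [hbdef]; exact mul_inv_cancel_left r g
  have hcba := hcoc r b a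
  rw [hrb] at hcba
  have h3 : f r (b * a) = (r • f b a)⁻¹ * (f g a * f r b) :=
    eq_inv_mul_iff_mul_eq.mpr hcba
  have h4 : f b a = c₀ a * (c₀ (b * a))⁻¹ * c₀ b := by
    rw [hc₀ b hb a ha, hAtriv b hb (c₀ a)]
  have h5 : g • (c₀ a)⁻¹ = r • (c₀ a)⁻¹ := by
    rw [← hrb, mul_smul, hAtriv b hb]
  rw [h3, h4, h5]
  simp only [smul_mul', smul_inv']
  apply Additive.ofMul.injective
  simp only [ofMul_mul, ofMul_inv]
  abel

end CNRAux

/-- Every class in `ker(res : H²(G,M) → H²(A,M))` admits a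
representative `f' ∈ Z²(G,M)` satisfying `f'(g₁,g₂) = f'(g₁,g₂a)` for all `a ∈ A`.
Here "the restriction of `f` to `A` is a coboundary" is expressed by a map
`c : G → M` with `f a b = a • c b * (c (a*b))⁻¹ * c a` for `a, b ∈ A`. -/
theorem crossed_normalized_representative {G M : Type*} [Group G] [Fintype G]
    [CommGroup M] [MulDistribMulAction G M] (A : Subgroup G) (hAn : A.Normal)
    (hAab : ∀ a b : G, a ∈ A → b ∈ A → a * b = b * a)
    (hAtriv : ∀ a ∈ A, ∀ m : M, a • m = m)
    (f : G → G → M)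
    (hcoc : ∀ g₁ g₂ g₃ : G, g₁ • f g₂ g₃ * f g₁ (g₂ * g₃) = f (g₁ * g₂) g₃ * f g₁ g₂)
    (hres : ∃ c : G → M, ∀ a ∈ A, ∀ b ∈ A, f a b = a • c b * (c (a * b))⁻¹ * c a) :
    ∃ f' : G → G → M, ∃ c : G → M,
      (∀ g₁ g₂ g₃ : G, g₁ • f' g₂ g₃ * f' g₁ (g₂ * g₃) = f' (g₁ * g₂) g₃ * f' g₁ g₂) ∧
      (∀ g₁ g₂ : G, ∀ a ∈ A, f' g₁ (g₂ * a) = f' g₁ g₂) ∧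
      (∀ g₁ g₂ : G, f g₁ g₂ = f' g₁ g₂ * (g₁ • c g₂) * (c (g₁ * g₂))⁻¹ * c g₁) := by
  obtain ⟨c₀, hc₀⟩ := hres
  set u : G → M := CNR.u A f c₀ with hudef
  refine ⟨fun g₁ g₂ => u g₁ * g₁ • u g₂ * f g₁ g₂ * (u (g₁ * g₂))⁻¹,
    fun g => (u g)⁻¹, ?_, ?_, ?_⟩
  · -- cocycle condition (holds for any `u`)
    intro g₁ g₂ g₃
    have h' : f g₁ (g₂ * g₃) = (g₁ • f g₂ g₃)⁻¹ * (f (g₁ * g₂) g₃ * f g₁ g₂) :=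
      eq_inv_mul_iff_mul_eq.mpr (hcoc g₁ g₂ g₃)
    simp only [h', smul_mul', smul_inv', mul_smul, mul_assoc]
    apply Additive.ofMul.injective
    simp only [ofMul_mul, ofMul_inv]
    abel
  · -- invariance under right multiplication by `A` in the second variable
    intro g₁ g₂ a ha
    have hB₁ : u (g₂ * a) = u g₂ * g₂ • (c₀ a)⁻¹ * f g₂ a :=
      CNR.uB A hAtriv f hcoc c₀ hc₀ g₂ a ha
    have hassoc : g₁ * (g₂ * a) = (g₁ * g₂) * a := (mul_assoc _ _ _).symm
    have hB₂ : u ((g₁ * g₂) * a) = u (g₁ * g₂) * (g₁ * g₂) • (c₀ a)⁻¹ * f (g₁ * g₂) a :=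
      CNR.uB A hAtriv f hcoc c₀ hc₀ (g₁ * g₂) a ha
    have h3 : f g₁ (g₂ * a) = (g₁ • f g₂ a)⁻¹ * (f (g₁ * g₂) a * f g₁ g₂) :=
      eq_inv_mul_iff_mul_eq.mpr (hcoc g₁ g₂ a)
    show u g₁ * g₁ • u (g₂ * a) * f g₁ (g₂ * a) * (u (g₁ * (g₂ * a)))⁻¹ =
      u g₁ * g₁ • u g₂ * f g₁ g₂ * (u (g₁ * g₂))⁻¹
    rw [hassoc, hB₁, hB₂, h3]
    simp only [smul_mul', smul_inv', mul_smul]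
    apply Additive.ofMul.injective
    simp only [ofMul_mul, ofMul_inv]
    abel
  · -- cohomologous to `f`
    intro g₁ g₂
    show f g₁ g₂ = u g₁ * g₁ • u g₂ * f g₁ g₂ * (u (g₁ * g₂))⁻¹ * g₁ • (u g₂)⁻¹ *
      ((u (g₁ * g₂))⁻¹)⁻¹ * (u g₁)⁻¹
    simp only [smul_inv', inv_inv]
    apply Additive.ofMul.injective
    simp only [ofMul_mul, ofMul_inv]
    abel
end

section
/- Let K be a field and A a finite abelian group with |A| invertible in K and with K containing enough roots of unity so that |Hom(A,K*)| = |A|. Let G be a finite group containing A as a normal subgroup, acting on K with A in the kernel of the action, and let f ∈ Z²(G,K*) satisfy f(g₁,g₂) = f(g₁,g₂a) for all a ∈ A, so that in the crossed product K^f*G one has U_{ga} = U_g U_a for all g ∈ G, a ∈ A, and K[A] embeds as the span of {U_a}. Then for every g ∈ G and character χ ∈ Hom(A,K*), conjugation satisfies U_g ι_χ U_g⁻¹ = ι_{ḡ(χ)·π_f(ḡ)}, where ι_χ = (1/|A|)Σ_{a∈A} ⟨χ,a⟩⁻¹ U_a. -/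
open scoped BigOperators

/-- In the crossed product `K^f*G` (elements encoded as coefficient
functions `G → K`, with convolution product `mul`, and `U_g` encoded as the
delta function at `g`), with `A ⊴ G` in the kernel of the action, `|A|`
invertible in `K`, `|Hom(A,K*)| = |A|`, and `f` normalized so that
`U_{ga} = U_g U_a`, conjugation by `U_g` maps the idempotent
`ι_χ = |A|⁻¹ Σ_{a∈A} χ(a)⁻¹ U_a` to `ι_{ḡ(χ)·π_f(ḡ)}`, i.e.
`U_g · ι_χ = ι_{ḡ(χ)·π_f(ḡ)} · U_g`, where
`(ḡ(χ)·π_f(ḡ))(a) = g(χ(g⁻¹ag))·f(a,g)`. -/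
theorem crossed_product_idempotent_conjugation {K G : Type*} [Field K] [Group G]
    [Fintype G] [DecidableEq G] [MulSemiringAction G K]
    (A : Subgroup G) [DecidablePred (· ∈ A)] (hAn : A.Normal)
    (hAtriv : ∀ a ∈ A, ∀ t : K, a • t = t)
    (hAcard : (Nat.card A : K) ≠ 0)
    (hchar : Nat.card (A →* Kˣ) = Nat.card A)
    (f : G → G → Kˣ)
    (hcoc : ∀ g₁ g₂ g₃ : G,
      g₁ • (f g₂ g₃ : K) * (f g₁ (g₂ * g₃) : K) = (f (g₁ * g₂) g₃ : K) * (f g₁ g₂ : K))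
    (hone : ∀ g : G, f g 1 = 1)
    (hnorm : ∀ g₁ g₂ : G, ∀ a ∈ A, f g₁ (g₂ * a) = f g₁ g₂)
    (mul : (G → K) → (G → K) → (G → K))
    (hmul : ∀ s t : G → K, ∀ x : G,
      mul s t x = ∑ h : G, s h * h • t (h⁻¹ * x) * (f h (h⁻¹ * x) : K))
    (g : G) (χ : A →* Kˣ) :
    mul (fun x => if x = g then 1 else 0)
        (fun x => if hx : x ∈ A then (Nat.card A : K)⁻¹ * ((χ ⟨x, hx⟩ : Kˣ) : K)⁻¹ else 0)
      = mul
        (fun x => if hx : x ∈ A then (Nat.card A : K)⁻¹ *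
            ((g • ((χ ⟨g⁻¹ * x * g, by simpa using hAn.conj_mem x hx g⁻¹⟩ : Kˣ) : K)) *
              (f x g : K))⁻¹
          else 0)
        (fun x => if x = g then 1 else 0) := by
  funext x
  rw [hmul, hmul]
  rw [Finset.sum_eq_single g (by intro h _ hne; simp [hne]) (by simp),
      Finset.sum_eq_single (x * g⁻¹) (by
        intro h _ hne
        have : ¬ (h⁻¹ * x = g) := by
          intro hc
          apply hne
          rw [← hc]; group
        simp [this]) (by simp)]
  have hgx : (x * g⁻¹)⁻¹ * x = g := by group
  simp only [if_pos rfl, hgx, if_true, smul_eq_mul, one_mul, smul_one, mul_one]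
  by_cases h1 : g⁻¹ * x ∈ A
  · have h2 : x * g⁻¹ ∈ A := hAn.mem_comm h1
    have he : (⟨g⁻¹ * (x * g⁻¹) * g, by simpa using hAn.conj_mem _ h2 g⁻¹⟩ : A)
        = ⟨g⁻¹ * x, h1⟩ := by
      ext; group
    have hf1 : f g (g⁻¹ * x) = 1 := by
      have := hnorm g 1 (g⁻¹ * x) h1
      simpa [hone] using this
    rw [dif_pos h1, dif_pos h2, he]
    have hinv : ∀ y : K, g • y⁻¹ = (g • y)⁻¹ := fun y =>
      map_inv₀ (MulSemiringAction.toRingHom G K g) y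
    have hnat : g • ((Nat.card A : K)) = (Nat.card A : K) :=
      map_natCast (MulSemiringAction.toRingHom G K g) _
    have hfne : (↑(f (x * g⁻¹) g) : K) ≠ 0 := Units.ne_zero _
    rw [hf1, smul_mul', hinv, hinv, hnat, mul_inv]
    simp [mul_assoc, inv_mul_cancel₀ hfne]
  · have h2 : ¬ (x * g⁻¹ ∈ A) := fun h => h1 (hAn.mem_comm h)
    rw [dif_neg h1, dif_neg h2]
    simp
end
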